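/- Let S ⊆ ℝ^m be a subspace and suppose that the set [(c+S) ∩ ℝ^m_{≥0}] ∩ L_W contains a point y together with points y + ηz₀ for all sufficiently small η > 0, where z₀ ∈ S is nonzero with supp(z₀) ⊆ supp(y). Then [(c+S) ∩ ℝ^m_{≥0}] ∩ L_W is not discrete. Conversely, if a nonzero z₀ ∈ S with supp(z₀) ⊆ supp(y) exists for some y in this set, then y + ηz₀ belongs to the set for all sufficiently small η > 0. -/

import Mathlib

/-- If `p ∈ [(c+S) ∩ ℝ^m_{≥0}] ∩ L_W` and there is a nonzero `z₀ ∈ S` with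
`supp z₀ ⊆ supp p`, then `p + η • z₀` belongs to the same set for all
sufficiently small `η > 0`, and consequently the set is not discrete. -/
theorem not_discrete_of_support_vector
    {m : ℕ} (S : Submodule ℝ (Fin m → ℝ)) (c : Fin m → ℝ) (W : Set (Fin m))
    (p : Fin m → ℝ)
    (hpA : p ∈ ({x : Fin m → ℝ | x - c ∈ S} ∩ {x | ∀ i, 0 ≤ x i} ∩
      {x | ∀ i, x i = 0 ↔ i ∈ W}))
    (z₀ : Fin m → ℝ) (hz₀S : z₀ ∈ S) (hz₀ne : z₀ ≠ 0)
    (hsupp : ∀ i, p i = 0 → z₀ i = 0) :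
    (∃ η₀ > (0 : ℝ), ∀ η : ℝ, 0 < η → η < η₀ →
      p + η • z₀ ∈ ({x : Fin m → ℝ | x - c ∈ S} ∩ {x | ∀ i, 0 ≤ x i} ∩
        {x | ∀ i, x i = 0 ↔ i ∈ W})) ∧
    ¬ (∀ a ∈ ({x : Fin m → ℝ | x - c ∈ S} ∩ {x | ∀ i, 0 ≤ x i} ∩
        {x | ∀ i, x i = 0 ↔ i ∈ W}),
        ∃ ε > (0 : ℝ), ∀ b ∈ ({x : Fin m → ℝ | x - c ∈ S} ∩ {x | ∀ i, 0 ≤ x i} ∩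
          {x | ∀ i, x i = 0 ↔ i ∈ W}), dist b a < ε → b = a) := by
  obtain ⟨⟨hS, hnn⟩, hW⟩ := hpA
  -- the set of coordinates where z₀ is nonzero
  have hTne : (Finset.univ.filter (fun i => z₀ i ≠ 0)).Nonempty := by
    obtain ⟨i, hi⟩ := Function.ne_iff.mp hz₀ne
    exact ⟨i, Finset.mem_filter.mpr ⟨Finset.mem_univ i, hi⟩⟩
  set T := Finset.univ.filter (fun i => z₀ i ≠ 0) with hT
  set η₀ : ℝ := T.inf' hTne (fun i => p i / |z₀ i|) with hη₀
  have hppos : ∀ i ∈ T, 0 < p i := by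
    intro i hi
    have hz : z₀ i ≠ 0 := (Finset.mem_filter.mp hi).2
    rcases lt_or_eq_of_le (hnn i) with h | h
    · exact h
    · exact absurd (hsupp i h.symm) hz
  have hη₀pos : 0 < η₀ := by
    rw [hη₀]
    apply Finset.lt_inf'_iff _ |>.mpr
    intro i hi
    exact div_pos (hppos i hi) (abs_pos.mpr (Finset.mem_filter.mp hi).2)
  -- key membership lemma
  have hmem : ∀ η : ℝ, 0 < η → η < η₀ →
      p + η • z₀ ∈ ({x : Fin m → ℝ | x - c ∈ S} ∩ {x | ∀ i, 0 ≤ x i} ∩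
        {x | ∀ i, x i = 0 ↔ i ∈ W}) := by
    intro η hη hηlt
    have hcoordpos : ∀ i, z₀ i ≠ 0 → 0 < p i + η * z₀ i := by
      intro i hz
      have hiT : i ∈ T := Finset.mem_filter.mpr ⟨Finset.mem_univ i, hz⟩
      have h1 : η < p i / |z₀ i| := lt_of_lt_of_le hηlt (Finset.inf'_le _ hiT)
      have h2 : η * |z₀ i| < p i := (lt_div_iff₀ (abs_pos.mpr hz)).mp h1
      have h3 : η * z₀ i ≥ -(η * |z₀ i|) := by
        rw [← mul_neg]
        apply mul_le_mul_of_nonneg_left _ hη.le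
        exact neg_abs_le _
      linarith
    refine ⟨⟨?_, ?_⟩, ?_⟩
    · show p + η • z₀ - c ∈ S
      have : p + η • z₀ - c = (p - c) + η • z₀ := by ring
      rw [this]
      exact S.add_mem hS (S.smul_mem η hz₀S)
    · intro i
      show 0 ≤ p i + η * z₀ i
      by_cases hz : z₀ i = 0
      · simp [hz, hnn i]
      · exact (hcoordpos i hz).le
    · intro i
      show p i + η * z₀ i = 0 ↔ i ∈ W
      rw [← hW i]
      by_cases hz : z₀ i = 0
      · simp [hz]
      · constructor
        · intro h; exact absurd h (hcoordpos i hz).ne'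
        · intro h; exact absurd (hsupp i h) hz
  refine ⟨⟨η₀, hη₀pos, hmem⟩, ?_⟩
  intro hdisc
  obtain ⟨ε, hε, hεb⟩ := hdisc p ⟨⟨hS, hnn⟩, hW⟩
  have hznorm : (0:ℝ) < ‖z₀‖ := norm_pos_iff.mpr hz₀ne
  set η := min (η₀ / 2) (ε / (2 * ‖z₀‖)) with hηdef
  have hηpos : 0 < η := lt_min (by linarith) (by positivity)
  have hηlt : η < η₀ := lt_of_le_of_lt (min_le_left _ _) (by linarith)
  have hb := hmem η hηpos hηlt
  have hdistlt : dist (p + η • z₀) p < ε := by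
    rw [dist_eq_norm]
    have : p + η • z₀ - p = η • z₀ := by ring
    rw [this, norm_smul, Real.norm_eq_abs, abs_of_pos hηpos]
    have : η ≤ ε / (2 * ‖z₀‖) := min_le_right _ _
    calc η * ‖z₀‖ ≤ (ε / (2 * ‖z₀‖)) * ‖z₀‖ := by nlinarith
      _ = ε / 2 := by field_simp
      _ < ε := by linarith
  have := hεb _ hb hdistlt
  have : η • z₀ = 0 := by
    have h := congrArg (fun x => x - p) this
    simpa using h
  rcases smul_eq_zero.mp this with h | h
  · exact hηpos.ne' h
  · exact hz₀ne h
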